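/- For every odd natural number n ≥ 3, the edge set of the complete graph K_n can be partitioned into exactly (n−1)/2 pairwise edge-disjoint Hamiltonian cycles; that is, there exist (n−1)/2 Hamiltonian cycles in K_n whose edge sets are pairwise disjoint and whose union is the entire edge set of K_n. -/

import Mathlib

open SimpleGraph

namespace HamDecompAux

/-- Build a walk in the complete graph from `f m` down to `f 0`. -/
def walkDown {V : Type*} (f : ℕ → V) : (m : ℕ) → (∀ j < m, f (j+1) ≠ f j) →
    (⊤ : SimpleGraph V).Walk (f m) (f 0)
  | 0, _ => .nil
  | (m+1), h => .cons ((SimpleGraph.top_adj _ _).2 (h m (Nat.lt_succ_self m)))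
      (walkDown f m (fun j hj => h j (by omega)))

lemma support_walkDown {V : Type*} (f : ℕ → V) (m : ℕ) (h : ∀ j < m, f (j+1) ≠ f j) :
    (walkDown f m h).support = ((List.range (m+1)).reverse).map f := by
  induction m with
  | zero => simp [walkDown, List.range_succ]
  | succ m ih => simp [walkDown, List.range_succ, ih]

lemma edges_walkDown {V : Type*} (f : ℕ → V) (m : ℕ) (h : ∀ j < m, f (j+1) ≠ f j) :
    (walkDown f m h).edges = ((List.range m).reverse).map (fun j => s(f (j+1), f j)) := by
  induction m with
  | zero => simp [walkDown]
  | succ m ih => simp [walkDown, List.range_succ, ih]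

/-- The zig-zag base sequence in `ZMod (2k)`. -/
def cc (k t : ℕ) : ZMod (2*k) :=
  if t % 2 = 0 then -((t/2 : ℕ) : ZMod (2*k)) else ((t/2 + 1 : ℕ) : ZMod (2*k))

variable {k : ℕ}

lemma val_cc (hk : 1 ≤ k) {t : ℕ} (ht : t < 2*k) :
    (cc k t).val = if t % 2 = 0 then (if t = 0 then 0 else 2*k - t/2) else t/2 + 1 := by
  haveI : NeZero (2*k) := ⟨by omega⟩
  unfold cc
  rcases Nat.even_or_odd t with he | ho
  · have h2 : t % 2 = 0 := Nat.even_iff.1 he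
    simp only [h2, if_true, reduceIte]
    rw [ZMod.neg_val]
    rcases eq_or_ne t 0 with rfl | h0
    · simp
    · have hlt : t/2 < 2*k := by omega
      have hne : ((t/2 : ℕ) : ZMod (2*k)) ≠ 0 := by
        intro hc
        have := ZMod.val_cast_of_lt hlt
        rw [hc] at this
        simp at this
        omega
      rw [if_neg hne, ZMod.val_cast_of_lt hlt]
      simp [h0]
  · have h2 : t % 2 = 1 := Nat.odd_iff.1 ho
    rw [if_neg (by omega), if_neg (by omega), ZMod.val_cast_of_lt (by omega)]

lemma cc_injOn (hk : 1 ≤ k) {t s : ℕ} (ht : t < 2*k) (hs : s < 2*k)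
    (h : cc k t = cc k s) : t = s := by
  have h1 := val_cc hk ht
  have h2 := val_cc hk hs
  rw [h] at h1
  have h3 := h1.symm.trans h2
  split_ifs at h3 <;> omega

/-- The step sequence. -/
def dd (k t : ℕ) : ZMod (2*k) :=
  if t % 2 = 0 then ((t+1 : ℕ) : ZMod (2*k)) else -((t+1 : ℕ) : ZMod (2*k))

lemma cc_succ (t : ℕ) : cc k (t+1) = cc k t + dd k t := by
  unfold cc dd
  rcases Nat.even_or_odd t with he | ho
  · have h2 : t % 2 = 0 := Nat.even_iff.1 he
    rw [if_neg (by omega), if_pos h2, if_pos h2]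
    have hn : (t+1)/2 + 1 + t/2 = (t+1) := by omega
    have := congrArg (fun x : ℕ => (x : ZMod (2*k))) hn
    push_cast at this ⊢
    linear_combination this
  · have h2 : t % 2 = 1 := Nat.odd_iff.1 ho
    rw [if_pos (by omega), if_neg (by omega), if_neg (by omega)]
    have hq : (t+1)/2 = t/2 + 1 := by omega
    rw [hq]
    have hn : (t/2 + 1) + (t/2 + 1) = t + 1 := by omega
    have := congrArg (fun x : ℕ => (x : ZMod (2*k))) hn
    push_cast at this ⊢
    linear_combination -this

lemma val_dd (hk : 1 ≤ k) {t : ℕ} (ht : t ≤ 2*k - 2) :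
    (dd k t).val = if t % 2 = 0 then t+1 else 2*k - (t+1) := by
  haveI : NeZero (2*k) := ⟨by omega⟩
  unfold dd
  have hlt : t + 1 < 2*k := by omega
  rcases Nat.even_or_odd t with he | ho
  · have h2 : t % 2 = 0 := Nat.even_iff.1 he
    rw [if_pos h2, if_pos h2, ZMod.val_cast_of_lt hlt]
  · have h2 : t % 2 = 1 := Nat.odd_iff.1 ho
    rw [if_neg (by omega), if_neg (by omega), ZMod.neg_val]
    have hne : ((t+1 : ℕ) : ZMod (2*k)) ≠ 0 := by
      intro hc
      have := ZMod.val_cast_of_lt hlt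
      rw [hc, ZMod.val_zero] at this
      omega
    rw [if_neg hne, ZMod.val_cast_of_lt hlt]

lemma dd_ne_zero (hk : 1 ≤ k) {t : ℕ} (ht : t ≤ 2*k - 2) : dd k t ≠ 0 := by
  haveI : NeZero (2*k) := ⟨by omega⟩
  have h1 := val_dd hk ht
  intro hc
  rw [hc, ZMod.val_zero] at h1
  split_ifs at h1 <;> omega

lemma dd_inj (hk : 1 ≤ k) {t s : ℕ} (ht : t ≤ 2*k - 2) (hs : s ≤ 2*k - 2)
    (h : dd k t = dd k s) : t = s := by
  have h1 := val_dd hk ht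
  rw [h] at h1
  have h3 := h1.symm.trans (val_dd hk hs)
  split_ifs at h3 <;> omega

lemma dd_antiinj (hk : 1 ≤ k) {t s : ℕ} (ht : t ≤ 2*k - 2) (hs : s ≤ 2*k - 2)
    (h : dd k t = -dd k s) : t + s = 2*k - 2 := by
  haveI : NeZero (2*k) := ⟨by omega⟩
  have h1 := val_dd hk ht
  rw [h, ZMod.neg_val, if_neg (dd_ne_zero hk hs), val_dd hk hs] at h1
  have h2 := val_dd hk hs
  split_ifs at h1 <;> omega

lemma cc_zero : cc k 0 = 0 := by simp [cc]

lemma cc_last (hk : 1 ≤ k) : cc k (2*k-1) = (k : ZMod (2*k)) := by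
  unfold cc
  rw [if_neg (by omega)]
  have hn : (2*k-1)/2 + 1 = k := by omega
  rw [hn]

lemma cc_shift (hk : 1 ≤ k) {t : ℕ} (ht : t ≤ 2*k - 1) :
    cc k (2*k - 1 - t) = cc k t + (k : ZMod (2*k)) := by
  have h2k : ((2*k : ℕ) : ZMod (2*k)) = 0 := ZMod.natCast_self _
  unfold cc
  rcases Nat.even_or_odd t with he | ho
  · have h2 : t % 2 = 0 := Nat.even_iff.1 he
    rw [if_neg (by omega), if_pos h2]
    have hn : (2*k - 1 - t)/2 + 1 = k - t/2 := by omega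
    rw [hn, Nat.cast_sub (by omega)]
    ring
  · have h2 : t % 2 = 1 := Nat.odd_iff.1 ho
    rw [if_pos (by omega), if_neg (by omega)]
    have hn : (2*k - 1 - t)/2 = k - (t/2 + 1) := by omega
    rw [hn, Nat.cast_sub (by omega)]
    push_cast at h2k ⊢
    linear_combination -h2k

lemma cc_surj (hk : 1 ≤ k) (x : ZMod (2*k)) : ∃ t < 2*k, cc k t = x := by
  haveI : NeZero (2*k) := ⟨by omega⟩
  classical
  have hsurj := Finset.surj_on_of_inj_on_of_card_le
    (s := Finset.range (2*k)) (t := (Finset.univ : Finset (ZMod (2*k))))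
    (fun a _ => cc k a) (fun a ha => Finset.mem_univ _)
    (fun a₁ a₂ h1 h2 hcc =>
      cc_injOn hk (Finset.mem_range.1 h1) (Finset.mem_range.1 h2) hcc)
    (by simp [Finset.card_univ, ZMod.card])
  obtain ⟨t, ht, hx⟩ := hsurj x (Finset.mem_univ x)
  exact ⟨t, Finset.mem_range.1 ht, hx.symm⟩

lemma cast_val_zmod (hk : 1 ≤ k) (z : ZMod (2*k)) : ((z.val : ℕ) : ZMod (2*k)) = z := by
  haveI : NeZero (2*k) := ⟨by omega⟩
  exact ZMod.natCast_rightInverse z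

lemma val_add_k (hk : 1 ≤ k) (j : ZMod (2*k)) (hj : j.val < k) :
    (j + ((k : ℕ) : ZMod (2*k))).val = j.val + k := by
  haveI : NeZero (2*k) := ⟨by omega⟩
  rw [← cast_val_zmod hk j, ← Nat.cast_add, ZMod.val_cast_of_lt (by omega),
    ZMod.val_cast_of_lt (by omega)]

lemma val_sub_k (hk : 1 ≤ k) (z : ZMod (2*k)) (hz : k ≤ z.val) :
    (z - ((k : ℕ) : ZMod (2*k))).val = z.val - k := by
  haveI : NeZero (2*k) := ⟨by omega⟩
  have hlt : z.val < 2*k := ZMod.val_lt z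
  rw [← cast_val_zmod hk z, ← Nat.cast_sub (by omega), ZMod.val_cast_of_lt (by omega),
    ZMod.val_cast_of_lt (by omega)]

/-- The vertex sequence of the `i`-th cycle. -/
def ff (k : ℕ) (i : ZMod (2*k)) (t : ℕ) : Option (ZMod (2*k)) :=
  if t = 0 ∨ 2*k < t then none else some (cc k (t-1) + i)

lemma ff_eq_none_iff (i : ZMod (2*k)) {t : ℕ} : ff k i t = none ↔ (t = 0 ∨ 2*k < t) := by
  unfold ff
  split_ifs with h <;> simp [h]

lemma ff_mid (i : ZMod (2*k)) {t : ℕ} (h1 : 1 ≤ t) (h2 : t ≤ 2*k) :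
    ff k i t = some (cc k (t-1) + i) := by
  unfold ff
  rw [if_neg (by omega)]

lemma ff_injOn (hk : 1 ≤ k) (i : ZMod (2*k)) : ∀ t ≤ 2*k, ∀ s ≤ 2*k,
    ff k i t = ff k i s → t = s := by
  intro t ht s hs h
  rcases Nat.eq_zero_or_pos t with rfl | htp
  · rcases Nat.eq_zero_or_pos s with rfl | hsp
    · rfl
    · rw [ff_mid i hsp hs, show ff k i 0 = none from (ff_eq_none_iff i).2 (Or.inl rfl)] at h
      exact absurd h (by simp)
  · rcases Nat.eq_zero_or_pos s with rfl | hsp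
    · rw [ff_mid i htp ht, show ff k i 0 = none from (ff_eq_none_iff i).2 (Or.inl rfl)] at h
      exact absurd h (by simp)
    · rw [ff_mid i htp ht, ff_mid i hsp hs] at h
      have := cc_injOn hk (t := t-1) (s := s-1) (by omega) (by omega)
        (by
          have h' := Option.some_injective _ h
          exact add_right_cancel h')
      omega

lemma ff_step (hk : 1 ≤ k) (i : ZMod (2*k)) : ∀ j < 2*k+1, ff k i (j+1) ≠ ff k i j := by
  intro j hj h
  rcases Nat.eq_zero_or_pos j with rfl | hjp
  · rw [ff_mid i (by omega) (by omega), show ff k i 0 = none from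
      (ff_eq_none_iff i).2 (Or.inl rfl)] at h
    simp at h
  · by_cases hje : j = 2*k
    · subst hje
      rw [show ff k i (2*k+1) = none from
        (ff_eq_none_iff i).2 (Or.inr (by omega)), ff_mid i (by omega) (by omega)] at h
      simp at h
    · exact absurd (ff_injOn hk i (j+1) (by omega) j (by omega) h) (by omega)

lemma edge_inj (hk : 1 ≤ k) (i : ZMod (2*k)) : ∀ j ≤ 2*k, ∀ l ≤ 2*k,
    s(ff k i (j+1), ff k i j) = s(ff k i (l+1), ff k i l) → j = l := by
  intro j hj l hl h
  rw [Sym2.eq_iff] at h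
  rcases h with ⟨h1, h2⟩ | ⟨h1, h2⟩
  · exact ff_injOn hk i j hj l hl h2
  · by_cases hj2 : j = 2*k
    · subst hj2
      rw [show ff k i (2*k+1) = none from (ff_eq_none_iff i).2 (Or.inr (by omega))] at h1
      have hl0 : l = 0 := by
        have := (ff_eq_none_iff i).1 h1.symm
        omega
      subst hl0
      rw [show (0:ℕ)+1 = 1 from rfl] at h2
      rw [ff_mid i (by omega) (by omega), ff_mid i (by omega) (by omega)] at h2
      have h3 := add_right_cancel (Option.some_injective _ h2)
      rw [cc_last hk, show (1:ℕ)-1 = 0 from rfl, cc_zero] at h3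
      have hv : (k:ℕ) = 0 := by
        rw [← ZMod.val_cast_of_lt (show k < 2*k by omega), h3, ZMod.val_zero]
      omega
    · by_cases hl2 : l = 2*k
      · subst hl2
        rw [show ff k i (2*k+1) = none from (ff_eq_none_iff i).2 (Or.inr (by omega))] at h2
        have hj0 : j = 0 := by
          have := (ff_eq_none_iff i).1 h2
          omega
        subst hj0
        rw [show (0:ℕ)+1 = 1 from rfl] at h1
        rw [ff_mid i (by omega) (by omega), ff_mid i (by omega) (by omega)] at h1
        have h3 := add_right_cancel (Option.some_injective _ h1)
        rw [show (1:ℕ)-1 = 0 from rfl, cc_zero, cc_last hk] at h3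
        have hv : (k:ℕ) = 0 := by
          rw [← ZMod.val_cast_of_lt (show k < 2*k by omega), ← h3, ZMod.val_zero]
        omega
      · have e1 := ff_injOn hk i (j+1) (by omega) l hl h1
        have e2 := ff_injOn hk i j hj (l+1) (by omega) h2
        omega

/-- The `i`-th Hamiltonian cycle as a closed walk at `none`. -/
def wk (k : ℕ) (hk : 1 ≤ k) (i : ZMod (2*k)) :
    (⊤ : SimpleGraph (Option (ZMod (2*k)))).Walk none none :=
  (walkDown (ff k i) (2*k+1) (ff_step hk i)).copy
    ((ff_eq_none_iff i).2 (Or.inr (by omega))) ((ff_eq_none_iff i).2 (Or.inl rfl))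

lemma support_tail_wk (hk : 1 ≤ k) (i : ZMod (2*k)) :
    (wk k hk i).support.tail = ((List.range (2*k+1)).reverse).map (ff k i) := by
  unfold wk
  rw [Walk.support_copy, support_walkDown, List.range_succ]
  simp

lemma edges_wk (hk : 1 ≤ k) (i : ZMod (2*k)) :
    (wk k hk i).edges = ((List.range (2*k+1)).reverse).map
      (fun j => s(ff k i (j+1), ff k i j)) := by
  unfold wk
  rw [Walk.edges_copy, edges_walkDown]

lemma mem_edges_wk (hk : 1 ≤ k) (i : ZMod (2*k)) (e : Sym2 (Option (ZMod (2*k)))) :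
    e ∈ (wk k hk i).edges ↔ ∃ j ≤ 2*k, e = s(ff k i (j+1), ff k i j) := by
  rw [edges_wk]
  simp only [List.mem_map, List.mem_reverse, List.mem_range]
  constructor
  · rintro ⟨j, hj, rfl⟩
    exact ⟨j, by omega, rfl⟩
  · rintro ⟨j, hj, rfl⟩
    exact ⟨j, by omega, rfl⟩

theorem wk_isHamiltonianCycle (hk : 1 ≤ k) (i : ZMod (2*k)) :
    (wk k hk i).IsHamiltonianCycle := by
  have hnodup : (((List.range (2*k+1)).reverse).map (ff k i)).Nodup := by
    refine List.Nodup.map_on ?_ (List.nodup_reverse.2 (List.nodup_range))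
    intro x hx y hy hxy
    rw [List.mem_reverse, List.mem_range] at hx hy
    exact ff_injOn hk i x (by omega) y (by omega) hxy
  have hmem : ∀ v : Option (ZMod (2*k)), v ∈ ((List.range (2*k+1)).reverse).map (ff k i) := by
    intro v
    rcases v with _ | x
    · exact List.mem_map.2 ⟨0, by simp [List.mem_reverse], (ff_eq_none_iff i).2 (Or.inl rfl)⟩
    · obtain ⟨t, ht, hct⟩ := cc_surj hk (x - i)
      refine List.mem_map.2 ⟨t+1, by simp [List.mem_reverse]; omega, ?_⟩
      rw [ff_mid i (by omega) (by omega)]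
      simp only [Nat.add_sub_cancel, hct, sub_add_cancel]
  have hlen : (wk k hk i).support.tail.length = 2*k+1 := by
    rw [support_tail_wk hk i]; simp
  have hnn : ¬ (wk k hk i).Nil := by
    rw [SimpleGraph.Walk.nil_iff_length_eq]
    have h1 : (wk k hk i).support.length = (wk k hk i).length + 1 :=
      SimpleGraph.Walk.length_support _
    have h2 : (wk k hk i).support.tail.length = (wk k hk i).support.length - 1 :=
      List.length_tail
    omega
  rw [Walk.isHamiltonianCycle_iff_isCycle_and_support_count_tail_eq_one]
  constructor
  · rw [Walk.isCycle_def]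
    refine ⟨⟨?_⟩, ?_, ?_⟩
    · rw [edges_wk]
      refine List.Nodup.map_on ?_ (List.nodup_reverse.2 (List.nodup_range))
      intro x hx y hy hxy
      rw [List.mem_reverse, List.mem_range] at hx hy
      exact edge_inj hk i x (by omega) y (by omega) hxy
    · intro hnil
      exact hnn (hnil ▸ SimpleGraph.Walk.nil_nil)
    · rw [support_tail_wk hk i]
      exact hnodup
  · intro a
    rw [support_tail_wk hk i]
    exact @List.count_eq_one_of_mem _ instBEqOfDecidableEq _ _ _ hnodup (hmem a)

lemma edge_form (hk : 1 ≤ k) (i : ZMod (2*k)) {a : ℕ} (ha : a ≤ 2*k) :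
    (s(ff k i (a+1), ff k i a) = s(none, some i) ∧ a = 0)
  ∨ (s(ff k i (a+1), ff k i a) = s(none, some (i + ((k:ℕ) : ZMod (2*k)))) ∧ a = 2*k)
  ∨ (∃ t ≤ 2*k-2, a = t+1 ∧
      s(ff k i (a+1), ff k i a) = s(some (cc k t + i), some (cc k (t+1) + i))) := by
  rcases Nat.eq_zero_or_pos a with rfl | hap
  · left
    refine ⟨?_, rfl⟩
    rw [show (0:ℕ)+1 = 1 from rfl, ff_mid i (by omega) (by omega),
      show ff k i 0 = none from (ff_eq_none_iff i).2 (Or.inl rfl)]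
    rw [show (1:ℕ)-1 = 0 from rfl, cc_zero, zero_add, Sym2.eq_swap]
  · by_cases hae : a = 2*k
    · right; left
      subst hae
      refine ⟨?_, rfl⟩
      rw [show ff k i (2*k+1) = none from (ff_eq_none_iff i).2 (Or.inr (by omega)),
        ff_mid i (by omega) (by omega), cc_last hk, add_comm]
    · right; right
      refine ⟨a-1, by omega, by omega, ?_⟩
      rw [ff_mid i (by omega) (by omega), ff_mid i (by omega) (by omega)]
      rw [show a+1-1 = (a-1)+1 by omega, Sym2.eq_swap]

lemma wk_disjoint (hk : 1 ≤ k) {i j : ZMod (2*k)} (hi : i.val < k) (hj : j.val < k)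
    (hne : i ≠ j) (e : Sym2 (Option (ZMod (2*k))))
    (hei : e ∈ (wk k hk i).edges) (hej : e ∈ (wk k hk j).edges) : False := by
  obtain ⟨a, ha, he1⟩ := (mem_edges_wk hk i e).1 hei
  obtain ⟨b, hb, he2⟩ := (mem_edges_wk hk j e).1 hej
  have hE : s(ff k i (a+1), ff k i a) = s(ff k j (b+1), ff k j b) := he1.symm.trans he2
  have hvk : ∀ z : ZMod (2*k), z.val < k → (z + ((k:ℕ) : ZMod (2*k))).val = z.val + k :=
    fun z hz => val_add_k hk z hz
  rcases edge_form hk i ha with ⟨hEi, ha0⟩ | ⟨hEi, haK⟩ | ⟨t, htle, hat, hEi⟩ <;>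
    rcases edge_form hk j hb with ⟨hEj, hb0⟩ | ⟨hEj, hbK⟩ | ⟨s, hsle, hbs, hEj⟩ <;>
    have hcan := hEi.symm.trans (hE.trans hEj) <;>
    rw [Sym2.eq_iff] at hcan
  · rcases hcan with ⟨_, h⟩ | ⟨h, _⟩
    · exact hne (Option.some_injective _ h)
    · simp at h
  · rcases hcan with ⟨_, h⟩ | ⟨h, _⟩
    · have h' := Option.some_injective _ h
      have := hvk j hj
      rw [← h'] at this
      omega
    · simp at h
  · rcases hcan with ⟨h, _⟩ | ⟨h, _⟩ <;> simp at h
  · rcases hcan with ⟨_, h⟩ | ⟨h, _⟩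
    · have h' := Option.some_injective _ h
      have := hvk i hi
      rw [h'] at this
      omega
    · simp at h
  · rcases hcan with ⟨_, h⟩ | ⟨h, _⟩
    · have h' := Option.some_injective _ h
      exact hne (add_right_cancel h')
    · simp at h
  · rcases hcan with ⟨h, _⟩ | ⟨h, _⟩ <;> simp at h
  · rcases hcan with ⟨h, _⟩ | ⟨_, h⟩ <;> simp at h
  · rcases hcan with ⟨h, _⟩ | ⟨_, h⟩ <;> simp at h
  · -- middle-middle
    rcases hcan with ⟨h1, h2⟩ | ⟨h1, h2⟩
    · have e1 := Option.some_injective _ h1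
      have e2 := Option.some_injective _ h2
      rw [cc_succ t, cc_succ s] at e2
      have hdd : dd k t = dd k s := by linear_combination e2 - e1
      have hts := dd_inj hk htle hsle hdd
      subst hts
      exact hne (by linear_combination e1)
    · have e1 := Option.some_injective _ h1
      have e2 := Option.some_injective _ h2
      rw [cc_succ s] at e1
      rw [cc_succ t] at e2
      have hdd : dd k t = -dd k s := by linear_combination e2 - e1
      have hts := dd_antiinj hk htle hsle hdd
      have hs1 : s + 1 = 2*k - 1 - t := by omega
      rw [hs1, cc_shift hk (by omega)] at h1
      have e1' := Option.some_injective _ h1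
      have hij : i = j + ((k:ℕ) : ZMod (2*k)) := by linear_combination e1'
      have := val_add_k hk j hj
      rw [← hij] at this
      omega

lemma wk_cover_none (hk : 1 ≤ k) (z : ZMod (2*k)) :
    ∃ i : ZMod (2*k), i.val < k ∧ s(none, some z) ∈ (wk k hk i).edges := by
  haveI : NeZero (2*k) := ⟨by omega⟩
  by_cases hz : z.val < k
  · refine ⟨z, hz, (mem_edges_wk hk z _).2 ⟨0, by omega, ?_⟩⟩
    rw [show (0:ℕ)+1 = 1 from rfl, ff_mid z (by omega) (by omega),
      show ff k z 0 = none from (ff_eq_none_iff z).2 (Or.inl rfl),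
      show (1:ℕ)-1 = 0 from rfl, cc_zero, zero_add, Sym2.eq_swap]
  · refine ⟨z - ((k:ℕ) : ZMod (2*k)), ?_, (mem_edges_wk hk _ _).2 ⟨2*k, by omega, ?_⟩⟩
    · have := val_sub_k hk z (by omega)
      have := ZMod.val_lt z
      omega
    · rw [show ff k (z - ((k:ℕ) : ZMod (2*k))) (2*k+1) = none from
        (ff_eq_none_iff _).2 (Or.inr (by omega)), ff_mid _ (by omega) (by omega), cc_last hk]
      have hzz : ((k:ℕ) : ZMod (2*k)) + (z - ((k:ℕ) : ZMod (2*k))) = z := by ring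
      rw [hzz]

lemma wk_cover_some (hk : 1 ≤ k) (x y : ZMod (2*k)) (hxy : x ≠ y) :
    ∃ i : ZMod (2*k), i.val < k ∧ s(some x, some y) ∈ (wk k hk i).edges := by
  haveI : NeZero (2*k) := ⟨by omega⟩
  have hd : y - x ≠ 0 := sub_ne_zero.2 (Ne.symm hxy)
  have hdv0 : (y - x).val ≠ 0 := fun hc => hd ((ZMod.val_eq_zero _).1 hc)
  have hdvlt : (y - x).val < 2*k := ZMod.val_lt _
  have key : ∃ t ≤ 2*k-2, dd k t = y - x := by
    rcases Nat.mod_two_eq_zero_or_one (y - x).val with hp | hp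
    · refine ⟨2*k - (y-x).val - 1, by omega, ?_⟩
      unfold dd
      rw [if_neg (by omega), show 2*k - (y-x).val - 1 + 1 = 2*k - (y-x).val by omega,
        Nat.cast_sub (by omega), ZMod.natCast_self, zero_sub, neg_neg, cast_val_zmod hk]
    · refine ⟨(y-x).val - 1, by omega, ?_⟩
      unfold dd
      rw [if_pos (by omega), show (y-x).val - 1 + 1 = (y-x).val by omega, cast_val_zmod hk]
  obtain ⟨t, ht, hdd⟩ := key
  by_cases hi0 : (x - cc k t).val < k
  · refine ⟨x - cc k t, hi0, (mem_edges_wk hk _ _).2 ⟨t+1, by omega, ?_⟩⟩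
    rw [ff_mid _ (by omega) (by omega), ff_mid _ (by omega) (by omega)]
    simp only [Nat.add_sub_cancel]
    have h1 : cc k (t+1) + (x - cc k t) = y := by
      rw [cc_succ, hdd]; ring
    have h2 : cc k t + (x - cc k t) = x := by ring
    rw [h1, h2, Sym2.eq_swap]
  · refine ⟨x - cc k t - ((k:ℕ) : ZMod (2*k)), ?_, (mem_edges_wk hk _ _).2
      ⟨2*k-2-t+1, by omega, ?_⟩⟩
    · have := val_sub_k hk (x - cc k t) (by omega)
      have := ZMod.val_lt (x - cc k t)
      omega
    · rw [ff_mid _ (by omega) (by omega), ff_mid _ (by omega) (by omega)]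
      simp only [Nat.add_sub_cancel]
      rw [show 2*k-2-t+1 = 2*k-1-t by omega, cc_shift hk (by omega),
        show 2*k-2-t = 2*k-1-(t+1) by omega, cc_shift hk (by omega)]
      have h1 : cc k t + ((k:ℕ) : ZMod (2*k)) + (x - cc k t - ((k:ℕ) : ZMod (2*k))) = x := by
        ring
      have h2 : cc k (t+1) + ((k:ℕ) : ZMod (2*k)) + (x - cc k t - ((k:ℕ) : ZMod (2*k))) = y := by
        rw [cc_succ, hdd]; ring
      rw [h1, h2]

theorem aux (k : ℕ) (hk : 1 ≤ k) :
    ∃ (v : Fin k → Option (ZMod (2*k)))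
      (w : (i : Fin k) → (⊤ : SimpleGraph (Option (ZMod (2*k)))).Walk (v i) (v i)),
      (∀ i, (w i).IsHamiltonianCycle) ∧
      (∀ i j, i ≠ j → ∀ e, e ∈ (w i).edges → e ∉ (w j).edges) ∧
      (∀ e, e ∈ (⊤ : SimpleGraph (Option (ZMod (2*k)))).edgeSet ↔ ∃ i, e ∈ (w i).edges) := by
  haveI : NeZero (2*k) := ⟨by omega⟩
  refine ⟨fun _ => none, fun i => wk k hk (((i : ℕ) : ZMod (2*k))),
    fun i => wk_isHamiltonianCycle hk _, ?_, ?_⟩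
  · intro i j hne e hei hej
    have hvi : (((i:ℕ) : ZMod (2*k))).val = (i:ℕ) :=
      ZMod.val_cast_of_lt (by have := i.2; omega)
    have hvj : (((j:ℕ) : ZMod (2*k))).val = (j:ℕ) :=
      ZMod.val_cast_of_lt (by have := j.2; omega)
    refine wk_disjoint hk (i := ((i:ℕ) : ZMod (2*k))) (j := ((j:ℕ) : ZMod (2*k)))
      (by rw [hvi]; exact i.2) (by rw [hvj]; exact j.2) ?_ e hei hej
    intro hc
    apply hne
    apply Fin.ext
    have : ((((i:ℕ) : ZMod (2*k))).val) = ((((j:ℕ) : ZMod (2*k))).val) := by rw [hc]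
    rw [hvi, hvj] at this
    exact this
  · intro e
    constructor
    · intro he
      induction e using Sym2.ind with
      | _ x y =>
        rw [SimpleGraph.mem_edgeSet, SimpleGraph.top_adj] at he
        have get : ∀ i₀ : ZMod (2*k), i₀.val < k →
            s(x, y) ∈ (wk k hk i₀).edges → ∃ i : Fin k, s(x,y) ∈
              (wk k hk (((i : ℕ) : ZMod (2*k)))).edges := by
          intro i₀ hi₀ hmem
          refine ⟨⟨i₀.val, hi₀⟩, ?_⟩
          have : (((i₀.val : ℕ) : ZMod (2*k))) = i₀ := cast_val_zmod hk i₀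
          rw [show ((⟨i₀.val, hi₀⟩ : Fin k) : ℕ) = i₀.val from rfl, this]
          exact hmem
        rcases x with _ | x <;> rcases y with _ | y
        · exact absurd rfl he
        · obtain ⟨i₀, hi₀, hmem⟩ := wk_cover_none hk y
          exact get i₀ hi₀ hmem
        · obtain ⟨i₀, hi₀, hmem⟩ := wk_cover_none hk x
          exact get i₀ hi₀ (by rwa [Sym2.eq_swap] at hmem)
        · obtain ⟨i₀, hi₀, hmem⟩ := wk_cover_some hk x y (by simpa using he)
          exact get i₀ hi₀ hmem
    · rintro ⟨i, hei⟩
      exact SimpleGraph.Walk.edges_subset_edgeSet _ hei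

end HamDecompAux

open HamDecompAux

/-- For every odd `n ≥ 3`, the edge set of the complete graph `K_n` can be partitioned into
exactly `(n-1)/2` pairwise edge-disjoint Hamiltonian cycles: there exist `(n-1)/2`
Hamiltonian cycles whose edge sets are pairwise disjoint and whose union is the whole
edge set of `K_n`. -/
theorem hamiltonian_decomposition_of_odd (n : ℕ) (hn : 3 ≤ n) (hodd : Odd n) :
    ∃ (v : Fin ((n - 1) / 2) → Fin n)
      (w : (i : Fin ((n - 1) / 2)) → (⊤ : SimpleGraph (Fin n)).Walk (v i) (v i)),
      (∀ i, (w i).IsHamiltonianCycle) ∧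
      (∀ i j, i ≠ j → ∀ e, e ∈ (w i).edges → e ∉ (w j).edges) ∧
      (∀ e, e ∈ (⊤ : SimpleGraph (Fin n)).edgeSet ↔ ∃ i, e ∈ (w i).edges) := by
  obtain ⟨m, hm⟩ := hodd
  have hk : 1 ≤ (n-1)/2 := by omega
  haveI : NeZero (2*((n-1)/2)) := ⟨by omega⟩
  obtain ⟨v, w, h1, h2, h3⟩ := aux ((n-1)/2) hk
  have hcard : Fintype.card (Option (ZMod (2*((n-1)/2)))) = n := by
    rw [Fintype.card_option, ZMod.card]
    omega
  let eq : Option (ZMod (2*((n-1)/2))) ≃ Fin n :=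
    (Fintype.equivFinOfCardEq hcard)
  let iso : (⊤ : SimpleGraph (Option (ZMod (2*((n-1)/2))))) ≃g (⊤ : SimpleGraph (Fin n)) :=
    SimpleGraph.Iso.completeGraph eq
  have hbij : Function.Bijective iso.toHom := eq.bijective
  refine ⟨fun i => iso.toHom (v i), fun i => (w i).map iso.toHom,
    fun i => (h1 i).map hbij, ?_, ?_⟩
  · intro i j hne e hei hej
    rw [SimpleGraph.Walk.edges_map, List.mem_map] at hei hej
    obtain ⟨e₀, he₀, heq₀⟩ := hei
    obtain ⟨e₁, he₁, heq₁⟩ := hej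
    have : e₀ = e₁ := Sym2.map.injective hbij.injective (heq₀.trans heq₁.symm)
    subst this
    exact h2 i j hne e₀ he₀ he₁
  · intro e
    constructor
    · intro he
      induction e using Sym2.ind with
      | _ a b =>
        rw [SimpleGraph.mem_edgeSet, SimpleGraph.top_adj] at he
        have h0 : s(eq.symm a, eq.symm b) ∈
            (⊤ : SimpleGraph (Option (ZMod (2*((n-1)/2))))).edgeSet := by
          rw [SimpleGraph.mem_edgeSet, SimpleGraph.top_adj]
          intro hc
          exact he (by simpa using congrArg eq hc)
        obtain ⟨i, hi⟩ := (h3 _).1 h0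
        refine ⟨i, ?_⟩
        rw [SimpleGraph.Walk.edges_map, List.mem_map]
        refine ⟨_, hi, ?_⟩
        rw [Sym2.map_pair_eq]
        have ha : iso.toHom (eq.symm a) = a := eq.apply_symm_apply a
        have hb : iso.toHom (eq.symm b) = b := eq.apply_symm_apply b
        rw [ha, hb]
    · rintro ⟨i, hei⟩
      exact SimpleGraph.Walk.edges_subset_edgeSet _ hei
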